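/- Let H be a real Hilbert space with inner product ⟨·,·⟩ and norm ‖·‖, and let q ≥ 1 be an integer. There exists a constant C > 0 depending only on q with the following property: for all a < b, every continuous function v : [a,b] → H, and every H-valued polynomial p of degree at most q satisfying p(a) = v(a), p(b) = v(b), and ∫_a^b ⟨v(t) − p(t), w(t)⟩ dt = 0 for every H-valued polynomial w of degree at most q − 2 (this orthogonality condition is vacuous when q = 1), one has sup_{t ∈ [a,b]} ‖p(t)‖ ≤ C sup_{t ∈ [a,b]} ‖v(t)‖. -/

import Mathlib

open MeasureTheory Set RealInnerProductSpace

/-- An `H`-valued polynomial of degree at most `q`: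
`t ↦ ∑_{i=0}^{q} t^i • c i` with coefficients `c i ∈ H`. -/
def IsPolyDegLE (H : Type*) [AddCommGroup H] [Module ℝ H] (q : ℕ) (f : ℝ → H) : Prop :=
  ∃ c : Fin (q + 1) → H, ∀ t : ℝ, f t = ∑ i : Fin (q + 1), t ^ (i : ℕ) • c i

/-- An `H`-valued polynomial of degree at most `n - 1` (i.e. with `n` coefficients);
for `n = 0` only the zero polynomial qualifies, so conditions quantified over such
polynomials are vacuous. -/
def IsPolyDegLT (H : Type*) [AddCommGroup H] [Module ℝ H] (n : ℕ) (f : ℝ → H) : Prop :=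
  ∃ c : Fin n → H, ∀ t : ℝ, f t = ∑ i : Fin n, t ^ (i : ℕ) • c i

noncomputable section AM
open Polynomial

variable (q : ℕ)

def amPoly (c : Fin (q+1) → ℝ) : Polynomial ℝ := ∑ i : Fin (q+1), C (c i) * X ^ (i:ℕ)

lemma amPoly_eval (c : Fin (q+1) → ℝ) (t : ℝ) :
    (amPoly q c).eval t = ∑ i : Fin (q+1), c i * t^(i:ℕ) := by
  simp [amPoly, eval_finset_sum]

lemma amPoly_coeff (c : Fin (q+1) → ℝ) (j : Fin (q+1)) : (amPoly q c).coeff (j:ℕ) = c j := by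
  simp only [amPoly, finset_sum_coeff, coeff_C_mul, coeff_X_pow]
  rw [Finset.sum_eq_single j] <;> simp +contextual [Fin.val_eq_val, eq_comm]

lemma amPoly_natDegree_le (c : Fin (q+1) → ℝ) : (amPoly q c).natDegree ≤ q := by
  refine Polynomial.natDegree_sum_le_of_forall_le _ _ fun i _ => ?_
  calc (C (c i) * X ^ (i:ℕ)).natDegree ≤ (X ^ (i:ℕ) : Polynomial ℝ).natDegree :=
        natDegree_C_mul_le _ _
    _ ≤ q := by rw [natDegree_X_pow]; omega

lemma amPoly_add (c c' : Fin (q+1) → ℝ) : amPoly q (c + c') = amPoly q c + amPoly q c' := by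
  simp [amPoly, add_mul, Finset.sum_add_distrib]

lemma amPoly_smul (r : ℝ) (c : Fin (q+1) → ℝ) : amPoly q (r • c) = C r * amPoly q c := by
  simp [amPoly, Finset.mul_sum, mul_assoc]

/-- The "data map": endpoint values at 0 and 1 together with moments against `s^k`. -/
def amL : (Fin (q+1) → ℝ) →ₗ[ℝ] (Fin (q+1) → ℝ) where
  toFun c := fun i =>
    if (i:ℕ) = 0 then (amPoly q c).eval 0
    else if (i:ℕ) = 1 then (amPoly q c).eval 1
    else ∫ s in (0:ℝ)..1, (amPoly q c).eval s * s ^ ((i:ℕ) - 2)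
  map_add' c c' := by
    funext i
    have hint : ∀ d : Fin (q+1) → ℝ, IntervalIntegrable
        (fun s => (amPoly q d).eval s * s ^ ((i:ℕ) - 2)) volume 0 1 :=
      fun d => ((amPoly q d).continuous.mul (continuous_pow _)).intervalIntegrable _ _
    simp only [amPoly_add, eval_add, Pi.add_apply]
    split_ifs with h1 h2
    · rfl
    · rfl
    · rw [← intervalIntegral.integral_add (hint c) (hint c')]
      congr 1; funext s; ring
  map_smul' r c := by
    funext i
    simp only [amPoly_smul, eval_mul, eval_C, RingHom.id_apply, Pi.smul_apply, smul_eq_mul]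
    split_ifs with h1 h2
    · rfl
    · rfl
    · rw [← intervalIntegral.integral_const_mul]
      congr 1; funext s; ring

lemma amPolyEqZero (hq : 1 ≤ q) (P : Polynomial ℝ) (hdeg : P.natDegree ≤ q)
    (h0 : P.eval 0 = 0) (h1 : P.eval 1 = 0)
    (hm : ∀ k, k < q - 1 → (∫ s in (0:ℝ)..1, P.eval s * s ^ k) = 0) : P = 0 := by
  -- factor out X
  obtain ⟨Q, hQ⟩ : X ∣ P := X_dvd_iff.mpr (by rwa [coeff_zero_eq_eval_zero])
  have hQ1 : Q.eval 1 = 0 := by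
    have := h1; rw [hQ] at this; simpa using this
  obtain ⟨R, hR⟩ : (X - C 1) ∣ Q := (dvd_iff_isRoot).mpr hQ1
  rcases eq_or_ne R 0 with hR0 | hR0
  · rw [hQ, hR, hR0, mul_zero, mul_zero]
  exfalso
  have hP : P = X * (X - C 1) * R := by rw [hQ, hR, mul_assoc]
  have hXne : (X : Polynomial ℝ) ≠ 0 := X_ne_zero
  have hX1ne : (X - C 1 : Polynomial ℝ) ≠ 0 := X_sub_C_ne_zero 1
  have hdR : R.natDegree + 2 ≤ q := by
    have : P.natDegree = 2 + R.natDegree := by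
      rw [hP, natDegree_mul (mul_ne_zero hXne hX1ne) hR0,
        natDegree_mul hXne hX1ne, natDegree_X, natDegree_X_sub_C]
    omega
  have hdRlt : R.natDegree < q - 1 := by omega
  -- the integral ∫ P R = 0
  have hint : ∀ k : ℕ, IntervalIntegrable (fun s => P.eval s * s ^ k) volume 0 1 :=
    fun k => (P.continuous.mul (continuous_pow _)).intervalIntegrable _ _
  have hPR : (∫ s in (0:ℝ)..1, P.eval s * R.eval s) = 0 := by
    have : ∀ s : ℝ, P.eval s * R.eval s
        = ∑ k ∈ Finset.range (q - 1), R.coeff k * (P.eval s * s ^ k) := by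
      intro s
      rw [eval_eq_sum_range' hdRlt s, Finset.mul_sum]
      congr 1; funext k; ring
    rw [intervalIntegral.integral_congr (g := fun s => ∑ k ∈ Finset.range (q - 1),
        R.coeff k * (P.eval s * s ^ k)) (fun s _ => this s)]
    rw [intervalIntegral.integral_finset_sum (fun k _ => (hint k).const_mul _)]
    refine Finset.sum_eq_zero fun k hk => ?_
    rw [intervalIntegral.integral_const_mul, hm k (Finset.mem_range.mp hk), mul_zero]
  -- but the integrand is nonpositive and not identically zero
  set g : ℝ → ℝ := fun s => s * (1 - s) * R.eval s ^ 2 with hg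
  have hgcont : Continuous g :=
    (continuous_id.mul (continuous_const.sub continuous_id)).mul (R.continuous.pow 2)
  have hgint : (∫ s in (0:ℝ)..1, g s) = 0 := by
    rw [← neg_eq_zero, ← intervalIntegral.integral_neg, ← hPR]
    congr 1; funext s; simp [hg, hP]; ring
  have hgnn : ∀ s ∈ Ioc (0:ℝ) 1, 0 ≤ g s := by
    intro s hs
    have : 0 ≤ s * (1 - s) := mul_nonneg hs.1.le (by linarith [hs.2])
    positivity
  obtain ⟨s₀, hs₀⟩ : ∃ s₀, s₀ ∈ Ioo (0:ℝ) 1 \ {x | R.IsRoot x} :=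
    ((Set.Ioo_infinite (by norm_num)).diff (R.finite_setOf_isRoot hR0)).nonempty
  have hgs₀ : 0 < g s₀ := by
    have h1 : s₀ ∈ Ioo (0:ℝ) 1 := hs₀.1
    have h2 : R.eval s₀ ≠ 0 := hs₀.2
    have : 0 < s₀ * (1 - s₀) := mul_pos h1.1 (by linarith [h1.2])
    positivity
  have hpos : 0 < ∫ s in (0:ℝ)..1, g s := by
    have hae : 0 ≤ᵐ[volume.restrict (Set.uIoc (0:ℝ) 1)] g := by
      filter_upwards [ae_restrict_mem measurableSet_uIoc] with s hs
      exact hgnn s (by rwa [Set.uIoc_of_le (by norm_num : (0:ℝ) ≤ 1)] at hs)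
    rw [intervalIntegral.integral_pos_iff_support_of_nonneg_ae' hae
      (hgcont.intervalIntegrable _ _)]
    refine ⟨by norm_num, ?_⟩
    have hopen : IsOpen ((g ⁻¹' Set.Ioi 0) ∩ Ioo 0 1) :=
      (isOpen_Ioi.preimage hgcont).inter isOpen_Ioo
    have hsub : (g ⁻¹' Set.Ioi 0) ∩ Ioo 0 1 ⊆ Function.support g ∩ Ioc 0 1 := by
      rintro x ⟨hx1, hx2⟩
      exact ⟨ne_of_gt hx1, hx2.1, hx2.2.le⟩
    refine lt_of_lt_of_le ?_ (measure_mono hsub)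
    exact hopen.measure_pos volume ⟨s₀, hgs₀, hs₀.1⟩
  rw [hgint] at hpos; exact lt_irrefl 0 hpos

lemma amL_injective (hq : 1 ≤ q) : Function.Injective (amL q) := by
  rw [← LinearMap.ker_eq_bot, LinearMap.ker_eq_bot']
  intro c hc
  have hc' : ∀ i : Fin (q+1), amL q c i = 0 := fun i => congrFun hc i
  have h0 : (amPoly q c).eval 0 = 0 := by
    have := hc' ⟨0, by omega⟩; simpa [amL] using this
  have h1 : (amPoly q c).eval 1 = 0 := by
    have := hc' ⟨1, by omega⟩; simpa [amL] using this
  have hm : ∀ k, k < q - 1 → (∫ s in (0:ℝ)..1, (amPoly q c).eval s * s ^ k) = 0 := by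
    intro k hk
    have := hc' ⟨k + 2, by omega⟩
    simpa [amL] using this
  have hP : amPoly q c = 0 :=
    amPolyEqZero q hq _ (amPoly_natDegree_le q c) h0 h1 hm
  funext j
  have := amPoly_coeff q c j
  rw [hP] at this; simpa using this.symm

def amEquiv (hq : 1 ≤ q) : (Fin (q+1) → ℝ) ≃ₗ[ℝ] (Fin (q+1) → ℝ) :=
  LinearEquiv.ofBijective (amL q)
    ⟨amL_injective q hq, LinearMap.injective_iff_surjective.mp (amL_injective q hq)⟩

def amK (hq : 1 ≤ q) : ℝ :=
  ‖LinearMap.toContinuousLinearMap ((amEquiv q hq).symm.toLinearMap)‖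

lemma amK_nonneg (hq : 1 ≤ q) : 0 ≤ amK q hq := norm_nonneg _

lemma am_norm_le (hq : 1 ≤ q) (c : Fin (q+1) → ℝ) : ‖c‖ ≤ amK q hq * ‖amL q c‖ := by
  have h : (LinearMap.toContinuousLinearMap ((amEquiv q hq).symm.toLinearMap)) (amL q c) = c := by
    simp [LinearMap.coe_toContinuousLinearMap']
    exact (amEquiv q hq).symm_apply_apply c
  calc ‖c‖ = ‖(LinearMap.toContinuousLinearMap ((amEquiv q hq).symm.toLinearMap)) (amL q c)‖ := by
        rw [h]
    _ ≤ amK q hq * ‖amL q c‖ := ContinuousLinearMap.le_opNorm _ _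

lemma am_core (hq : 1 ≤ q) : ∃ C : ℝ, 0 < C ∧ ∀ a b : ℝ, a < b →
    ∀ f : ℝ → ℝ, ContinuousOn f (Icc a b) →
    ∀ c : Fin (q+1) → ℝ, ∀ M : ℝ,
    (∀ t ∈ Icc a b, |f t| ≤ M) →
    (∑ i : Fin (q+1), c i * a ^ (i:ℕ)) = f a →
    (∑ i : Fin (q+1), c i * b ^ (i:ℕ)) = f b →
    (∀ k, k < q - 1 →
      (∫ t in a..b, (f t - ∑ i : Fin (q+1), c i * t ^ (i:ℕ)) * ((t - a)/(b - a))^k) = 0) →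
    ∀ t ∈ Icc a b, |∑ i : Fin (q+1), c i * t ^ (i:ℕ)| ≤ C * M := by
  refine ⟨(q+1) * (amK q hq + 1), by have := amK_nonneg q hq; positivity, ?_⟩
  intro a b hab f hf c M hM hpa hpb hmom t ht
  set d : ℝ := b - a with hd
  have hd0 : 0 < d := by simp [hd]; linarith
  have hM0 : 0 ≤ M := le_trans (abs_nonneg _) (hM a ⟨le_refl a, hab.le⟩)
  set Pc : Polynomial ℝ := amPoly q c with hPc
  set Pt : Polynomial ℝ := Pc.comp (C d * X + C a) with hPt
  have hPt_deg : Pt.natDegree ≤ q := by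
    rw [hPt, natDegree_comp, natDegree_linear hd0.ne', mul_one]
    exact amPoly_natDegree_le q c
  have hPt_eval : ∀ s : ℝ, Pt.eval s = Pc.eval (d * s + a) := by
    intro s; simp [hPt, eval_comp]
  set ct : Fin (q+1) → ℝ := fun j => Pt.coeff (j:ℕ) with hct
  have hct_eval : ∀ s : ℝ, (amPoly q ct).eval s = Pt.eval s := by
    intro s
    rw [amPoly_eval, eval_eq_sum_range' (lt_of_le_of_lt hPt_deg (Nat.lt_succ_self q)),
      ← Fin.sum_univ_eq_sum_range (fun i => Pt.coeff i * s ^ i)]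
  -- bound each component of the data of `ct`
  have hdata : ∀ i : Fin (q+1), |amL q ct i| ≤ M := by
    intro i
    rcases Nat.lt_or_ge (i : ℕ) 2 with hi2 | hi2
    · interval_cases h : (i : ℕ)
      · have : amL q ct i = Pc.eval a := by
          simp only [amL, LinearMap.coe_mk, AddHom.coe_mk, h, if_pos rfl]
          rw [hct_eval, hPt_eval]; norm_num
        rw [this]
        have : Pc.eval a = f a := by rw [hPc, amPoly_eval]; exact hpa
        rw [this]; exact hM a ⟨le_refl a, hab.le⟩
      · have : amL q ct i = Pc.eval b := by
          simp only [amL, LinearMap.coe_mk, AddHom.coe_mk, h]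
          norm_num
          rw [hct_eval, hPt_eval]
          have hb : d * 1 + a = b := by simp [hd]
          rw [hb]
        rw [this]
        have : Pc.eval b = f b := by rw [hPc, amPoly_eval]; exact hpb
        rw [this]; exact hM b ⟨hab.le, le_refl b⟩
    · set k : ℕ := (i : ℕ) - 2 with hk
      have hkq : k < q - 1 := by
        have := i.isLt; omega
      have hiL : amL q ct i = ∫ s in (0:ℝ)..1, Pt.eval s * s ^ k := by
        simp only [amL, LinearMap.coe_mk, AddHom.coe_mk]
        rw [if_neg (by omega), if_neg (by omega)]
        congr 1; funext s; rw [hct_eval]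
      set w : ℝ → ℝ := fun t => Pc.eval t * ((t - a)/d)^k with hw
      have hcomp : ∀ s : ℝ, Pt.eval s * s ^ k = w (d * s + a) := by
        intro s
        rw [hPt_eval, hw]
        simp only
        congr 2
        field_simp
        ring
      have hchange : (∫ s in (0:ℝ)..1, Pt.eval s * s ^ k)
          = d⁻¹ * ∫ t in a..b, w t := by
        rw [intervalIntegral.integral_congr (g := fun s => w (d * s + a))
          (fun s _ => hcomp s)]
        rw [intervalIntegral.integral_comp_mul_add w hd0.ne' a]
        have hb : d * 1 + a = b := by simp [hd]
        have ha : d * 0 + a = a := by ring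
        rw [ha, hb, smul_eq_mul]
      have hiw : IntervalIntegrable w volume a b :=
        (Pc.continuous.mul ((continuous_pow k).comp
          ((continuous_id.sub continuous_const).div_const d))).intervalIntegrable _ _
      have hif : IntervalIntegrable (fun t => f t * ((t - a)/d)^k) volume a b := by
        apply ContinuousOn.intervalIntegrable
        rw [uIcc_of_le hab.le]
        exact hf.mul (((continuous_pow k).comp
          ((continuous_id.sub continuous_const).div_const d)).continuousOn)
      have hsub : (∫ t in a..b, w t) = ∫ t in a..b, f t * ((t - a)/d)^k := by
        have h0 : (∫ t in a..b, (f t * ((t - a)/d)^k - w t)) = 0 := by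
          rw [← hmom k hkq]
          congr 1; funext t
          simp only [hw, hPc, amPoly_eval]
          ring
        have := intervalIntegral.integral_sub hif hiw
        rw [h0] at this
        linarith [this]
      have hbound : |∫ t in a..b, f t * ((t - a)/d)^k| ≤ M * d := by
        have := intervalIntegral.norm_integral_le_of_norm_le_const
          (C := M) (f := fun t => f t * ((t - a)/d)^k) (a := a) (b := b) ?_
        · rw [Real.norm_eq_abs] at this
          calc |∫ t in a..b, f t * ((t - a)/d)^k| ≤ M * |b - a| := this
            _ = M * d := by rw [abs_of_pos hd0]
        · intro x hx
          rw [Set.uIoc_of_le hab.le] at hx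
          have hxI : x ∈ Icc a b := ⟨hx.1.le, hx.2⟩
          rw [Real.norm_eq_abs, abs_mul]
          have h1 : |f x| ≤ M := hM x hxI
          have h2 : |((x - a)/d)^k| ≤ 1 := by
            rw [abs_pow]
            apply pow_le_one₀ (abs_nonneg _)
            rw [abs_of_nonneg (div_nonneg (by linarith [hxI.1]) hd0.le)]
            rw [div_le_one hd0]
            simp [hd]; linarith [hxI.2]
          calc |f x| * |((x - a)/d)^k| ≤ M * 1 :=
              mul_le_mul h1 h2 (abs_nonneg _) hM0
            _ = M := mul_one M
      rw [hiL, hchange, abs_mul, abs_of_pos (inv_pos.mpr hd0)]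
      calc d⁻¹ * |∫ t in a..b, w t| = d⁻¹ * |∫ t in a..b, f t * ((t - a)/d)^k| := by
            rw [hsub]
        _ ≤ d⁻¹ * (M * d) := by
            apply mul_le_mul_of_nonneg_left hbound (by positivity)
        _ = M := by field_simp
  -- conclude
  have hnorm : ‖amL q ct‖ ≤ M := by
    rw [pi_norm_le_iff_of_nonneg hM0]
    intro i; rw [Real.norm_eq_abs]; exact hdata i
  have hctn : ‖ct‖ ≤ amK q hq * M :=
    le_trans (am_norm_le q hq ct)
      (mul_le_mul_of_nonneg_left hnorm (amK_nonneg q hq))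
  -- evaluate at t
  set s : ℝ := (t - a)/d with hs
  have hs01 : s ∈ Icc (0:ℝ) 1 := by
    constructor
    · apply div_nonneg _ hd0.le; linarith [ht.1]
    · rw [div_le_one hd0]; simp [hd]; linarith [ht.2]
  have hts : d * s + a = t := by
    rw [hs]; field_simp; ring
  have heval : (∑ i : Fin (q+1), c i * t ^ (i:ℕ)) = ∑ i : Fin (q+1), ct i * s ^ (i:ℕ) := by
    rw [← amPoly_eval, ← hPc, ← hts, ← hPt_eval, ← hct_eval, amPoly_eval]
  rw [heval]
  calc |∑ i : Fin (q+1), ct i * s ^ (i:ℕ)| ≤ ∑ i : Fin (q+1), |ct i * s ^ (i:ℕ)| :=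
      Finset.abs_sum_le_sum_abs _ _
    _ ≤ ∑ _i : Fin (q+1), amK q hq * M := by
        apply Finset.sum_le_sum
        intro i _
        rw [abs_mul]
        have h1 : |ct i| ≤ amK q hq * M := by
          calc |ct i| = ‖ct i‖ := rfl
            _ ≤ ‖ct‖ := norm_le_pi_norm ct i
            _ ≤ amK q hq * M := hctn
        have h2 : |s ^ (i:ℕ)| ≤ 1 := by
          rw [abs_pow]
          exact pow_le_one₀ (abs_nonneg _) (by rw [abs_of_nonneg hs01.1]; exact hs01.2)
        calc |ct i| * |s ^ (i:ℕ)| ≤ (amK q hq * M) * 1 :=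
            mul_le_mul h1 h2 (abs_nonneg _) (mul_nonneg (amK_nonneg q hq) hM0)
          _ = amK q hq * M := mul_one _
    _ = (q+1) * (amK q hq * M) := by
        rw [Finset.sum_const, Finset.card_univ, Fintype.card_fin]
        push_cast; ring
    _ ≤ (q+1) * (amK q hq + 1) * M := by
        have : (0:ℝ) ≤ q + 1 := by positivity
        nlinarith [amK_nonneg q hq]

theorem am_main (H : Type*) [NormedAddCommGroup H]
    [InnerProductSpace ℝ H] [CompleteSpace H] (hq : 1 ≤ q) :
    ∃ C : ℝ, 0 < C ∧
      ∀ (a b : ℝ), a < b →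
        ∀ v : ℝ → H, ContinuousOn v (Icc a b) →
          ∀ p : ℝ → H, IsPolyDegLE H q p → p a = v a → p b = v b →
            (∀ w : ℝ → H, IsPolyDegLT H (q - 1) w →
              (∫ t in a..b, ⟪v t - p t, w t⟫) = 0) →
            (⨆ t : Icc a b, ‖p (t : ℝ)‖) ≤ C * ⨆ t : Icc a b, ‖v (t : ℝ)‖ := by
  obtain ⟨C, hC, hcore⟩ := am_core q hq
  refine ⟨C, hC, ?_⟩
  intro a b hab v hv p hp hpa hpb horth
  obtain ⟨c, hc⟩ := hp
  haveI : Nonempty (Icc a b) := (Set.nonempty_Icc.mpr hab.le).to_subtype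
  have hbdd : BddAbove (Set.range fun t : Icc a b => ‖v (t:ℝ)‖) := by
    have h2 := isCompact_Icc.bddAbove_image (hv.norm)
    rwa [Set.image_eq_range] at h2
  set S := ⨆ t : Icc a b, ‖v (t:ℝ)‖ with hS
  have hvS : ∀ t ∈ Icc a b, ‖v t‖ ≤ S := fun t htt => le_ciSup hbdd ⟨t, htt⟩
  have hS0 : 0 ≤ S := le_trans (norm_nonneg _) (hvS a ⟨le_refl a, hab.le⟩)
  apply ciSup_le
  rintro ⟨t₀, ht₀⟩
  simp only
  rcases eq_or_ne (p t₀) 0 with h0 | h0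
  · rw [h0, norm_zero]; positivity
  set e : H := ‖p t₀‖⁻¹ • p t₀ with he
  have hne : ‖p t₀‖ ≠ 0 := norm_ne_zero_iff.mpr h0
  have hee : ‖e‖ = 1 := by
    rw [he, norm_smul, norm_inv, norm_norm, inv_mul_cancel₀ hne]
  have hpe : ⟪p t₀, e⟫ = ‖p t₀‖ := by
    rw [he, real_inner_smul_right, real_inner_self_eq_norm_sq, sq, ← mul_assoc,
      inv_mul_cancel₀ hne, one_mul]
  set f : ℝ → ℝ := fun t => ⟪v t, e⟫ with hf
  set c' : Fin (q+1) → ℝ := fun i => ⟪c i, e⟫ with hc'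
  have hpc' : ∀ t : ℝ, ⟪p t, e⟫ = ∑ i : Fin (q+1), c' i * t ^ (i:ℕ) := by
    intro t
    rw [hc t, sum_inner]
    refine Finset.sum_congr rfl fun i _ => ?_
    rw [real_inner_smul_left, hc', mul_comm]
  have hfc : ContinuousOn f (Icc a b) := hv.inner continuousOn_const
  have hfM : ∀ t ∈ Icc a b, |f t| ≤ S := by
    intro t htt
    calc |f t| ≤ ‖v t‖ * ‖e‖ := abs_real_inner_le_norm _ _
      _ = ‖v t‖ := by rw [hee, mul_one]
      _ ≤ S := hvS t htt
  have ha' : (∑ i : Fin (q+1), c' i * a ^ (i:ℕ)) = f a := by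
    rw [← hpc' a, hf, hpa]
  have hb' : (∑ i : Fin (q+1), c' i * b ^ (i:ℕ)) = f b := by
    rw [← hpc' b, hf, hpb]
  have hmom : ∀ k, k < q - 1 →
      (∫ t in a..b, (f t - ∑ i : Fin (q+1), c' i * t ^ (i:ℕ)) * ((t-a)/(b-a))^k) = 0 := by
    intro k hk
    set W : Polynomial ℝ := (Polynomial.C (b-a)⁻¹ * (X - Polynomial.C a))^k with hW
    have hWdeg : W.natDegree < q - 1 := by
      rw [hW, natDegree_pow, natDegree_C_mul (inv_ne_zero (sub_ne_zero.mpr hab.ne')),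
        natDegree_X_sub_C, mul_one]
      exact hk
    set w : ℝ → H := fun t => W.eval t • e with hw
    have hwpoly : IsPolyDegLT H (q-1) w := by
      refine ⟨fun j => W.coeff (j:ℕ) • e, fun t => ?_⟩
      rw [hw]
      simp only
      rw [eval_eq_sum_range' hWdeg,
        ← Fin.sum_univ_eq_sum_range (fun j => W.coeff j * t ^ j), Finset.sum_smul]
      refine Finset.sum_congr rfl fun i _ => ?_
      rw [mul_comm (W.coeff (i:ℕ)) (t ^ (i:ℕ)), ← smul_smul]
    have h0 := horth w hwpoly
    have hWeval : ∀ t : ℝ, W.eval t = ((t-a)/(b-a))^k := by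
      intro t
      rw [hW]
      simp only [eval_pow, eval_mul, eval_C, eval_sub, eval_X]
      rw [div_eq_inv_mul]
    have hterm : ∀ t : ℝ, (inner ℝ (v t - p t) (w t) : ℝ)
        = (f t - ∑ i : Fin (q+1), c' i * t ^ (i:ℕ)) * ((t-a)/(b-a))^k := by
      intro t
      rw [hw]
      simp only
      rw [real_inner_smul_right, inner_sub_left, ← hpc' t, hWeval t, hf]
      simp only
      ring
    rw [← h0]
    exact intervalIntegral.integral_congr fun t _ => (hterm t).symm
  have hfin := hcore a b hab f hfc c' S hfM ha' hb' hmom t₀ ht₀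
  calc ‖p t₀‖ = ⟪p t₀, e⟫ := hpe.symm
    _ ≤ |(⟪p t₀, e⟫ : ℝ)| := le_abs_self _
    _ = |∑ i : Fin (q+1), c' i * t₀ ^ (i:ℕ)| := by rw [hpc' t₀]
    _ ≤ C * S := hfin

end AM

/-- **Stability of the local Aziz–Monk projection in the `L^∞` norm.** For `q ≥ 1` there
exists a constant `C > 0` depending only on `q` such that for all `a < b`, every continuous
`v : [a,b] → H`, and every polynomial `p` of degree at most `q` interpolating `v` at both
endpoints with `v − p` `L²`-orthogonal to polynomials of degree at most `q − 2`
(vacuous for `q = 1`), one has `sup_{t ∈ [a,b]} ‖p(t)‖ ≤ C sup_{t ∈ [a,b]} ‖v(t)‖`. -/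
theorem aziz_monk_projection_stability (H : Type*) [NormedAddCommGroup H]
    [InnerProductSpace ℝ H] [CompleteSpace H] (q : ℕ) (hq : 1 ≤ q) :
    ∃ C : ℝ, 0 < C ∧
      ∀ (a b : ℝ), a < b →
        ∀ v : ℝ → H, ContinuousOn v (Icc a b) →
          ∀ p : ℝ → H, IsPolyDegLE H q p → p a = v a → p b = v b →
            (∀ w : ℝ → H, IsPolyDegLT H (q - 1) w →
              (∫ t in a..b, ⟪v t - p t, w t⟫) = 0) →
            (⨆ t : Icc a b, ‖p (t : ℝ)‖) ≤ C * ⨆ t : Icc a b, ‖v (t : ℝ)‖ := by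
  exact am_main q H hq
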